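/- The subspace K(M_n) of bounded counting functions on the free monoid M_n is spanned by the extension relations {l_w, r_w : w ∈ M_n}, where l_w = p_w - Σ_{s∈S} p_{sw} and r_w = p_w - Σ_{s∈S} p_{ws}. -/

import Mathlib

open List Finset

/-- Number of occurrences of `w` as a contiguous subword of `v`. -/
def occ {α : Type*} [DecidableEq α] (w v : List α) : ℕ :=
  ((List.range (v.length + 1 - w.length)).filter (fun i => decide (w <+: v.drop i))).length

/-- Elementary counting function, with the convention `p_ε(v) = |v|`. -/
def cnt {α : Type*} [DecidableEq α] (w v : List α) : ℚ :=
  if w = [] then v.length else occ w v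


section OccLemmas
variable {α : Type*} [DecidableEq α]

lemma occ_nil_right (w : List α) : occ w [] = if w = [] then 1 else 0 := by
  rcases w with _ | ⟨x, w⟩ <;> simp [occ]

lemma occ_of_lt {w v : List α} (h : v.length < w.length) : occ w v = 0 := by
  have : v.length + 1 - w.length = 0 := by omega
  simp [occ, this]

lemma occ_cons (w : List α) (x : α) (v : List α) :
    occ w (x :: v) = occ w v + (if w <+: x :: v then 1 else 0) := by
  by_cases h : w.length ≤ v.length + 1
  · have h2 : (x :: v).length + 1 - w.length = (v.length + 1 - w.length) + 1 := by
      simp only [length_cons]; omega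
    rw [occ, h2, List.range_succ_eq_map, List.filter_cons, List.filter_map]
    have h3 : ((fun i => decide (w <+: (x :: v).drop i)) ∘ Nat.succ)
        = fun i => decide (w <+: v.drop i) := by
      funext i; simp [List.drop_succ_cons]
    by_cases hp : w <+: x :: v <;> simp [hp, h3, occ, Nat.add_comm]
  · have h1 : occ w (x :: v) = 0 := occ_of_lt (by simp; omega)
    have h2 : occ w v = 0 := occ_of_lt (by omega)
    have h3 : ¬ (w <+: x :: v) := fun hp => by
      have := hp.length_le; simp at this; omega
    simp [h1, h2, h3]

lemma occ_eq_of_length_eq {w v : List α} (h : w.length = v.length) :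
    occ w v = if w = v then 1 else 0 := by
  have h1 : v.length + 1 - w.length = 1 := by omega
  rw [occ, h1]
  have : List.range 1 = [0] := by simp [List.range_succ]
  rw [this]
  by_cases hp : w <+: v
  · have : w = v := hp.eq_of_length h
    simp [this]
  · have : w ≠ v := by rintro rfl; exact hp prefix_rfl
    simp [hp, this]

end OccLemmas

section FinAlphabet
variable {n : ℕ}

lemma occ_left (w v : List (Fin n)) :
    occ w v = (if w <+: v then 1 else 0) + ∑ s : Fin n, occ (s :: w) v := by
  induction v with
  | nil =>
    rcases w with _ | ⟨x, w⟩ <;> simp [occ_nil_right]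
  | cons x v ih =>
    rw [occ_cons, ih]
    have hs : ∀ s : Fin n, occ (s :: w) (x :: v)
        = occ (s :: w) v + (if s :: w <+: x :: v then 1 else 0) := fun s => occ_cons _ _ _
    simp only [hs, Finset.sum_add_distrib]
    have key : (∑ s : Fin n, if s :: w <+: x :: v then 1 else 0) = (if w <+: v then 1 else 0) := by
      have : ∀ s : Fin n, (if s :: w <+: x :: v then (1:ℕ) else 0)
          = if s = x then (if w <+: v then 1 else 0) else 0 := by
        intro s
        by_cases hsx : s = x <;> by_cases hwv : w <+: v <;>
          simp [List.cons_prefix_cons, hsx, hwv]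
      simp only [this, Finset.sum_ite_eq']
      simp
    omega
end FinAlphabet

-- S2
lemma sum_snoc_prefix {n : ℕ} (w u : List (Fin n)) :
    (∑ s : Fin n, if w ++ [s] <+: u then (1:ℕ) else 0)
      = if w <+: u ∧ w ≠ u then 1 else 0 := by
  by_cases hp : w <+: u
  · by_cases hne : w = u
    · subst hne
      have : ∀ s : Fin n, ¬ (w ++ [s] <+: w) := by
        intro s h; have := h.length_le; simp at this
      simp [this]
    · obtain ⟨t, ht⟩ := hp
      have hp' : w <+: u := ⟨t, ht⟩
      have htne : t ≠ [] := by rintro rfl; simp at ht; exact hne ht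
      rcases t with _ | ⟨s₀, t'⟩
      · exact absurd rfl htne
      · have hiff : ∀ s : Fin n, (w ++ [s] <+: u) ↔ s = s₀ := by
          intro s
          constructor
          · intro h
            rw [← ht] at h
            have : [s] <+: s₀ :: t' := (List.prefix_append_right_inj w).mp h
            rcases List.cons_prefix_cons.mp this with ⟨rfl, -⟩; rfl
          · rintro rfl
            exact ⟨t', by rw [← ht]; simp⟩
        simp only [hiff]
        simp [hp', hne]
  · have : ∀ s : Fin n, ¬ (w ++ [s] <+: u) := by
      intro s h; exact hp ((List.prefix_append w [s]).trans h)
    simp [this, hp]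

lemma occ_right {n : ℕ} (w v : List (Fin n)) :
    occ w v = (if w <:+ v then 1 else 0) + ∑ s : Fin n, occ (w ++ [s]) v := by
  induction v with
  | nil =>
    have h0 : ∀ s : Fin n, occ (w ++ [s]) ([] : List (Fin n)) = 0 :=
      fun s => occ_of_lt (by simp)
    rcases w with _ | ⟨x, w⟩ <;> simp [occ_nil_right, h0]
  | cons x v ih =>
    rw [occ_cons, ih]
    have hs : ∀ s : Fin n, occ (w ++ [s]) (x :: v)
        = occ (w ++ [s]) v + (if w ++ [s] <+: x :: v then 1 else 0) := fun s => occ_cons _ _ _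
    simp only [hs, Finset.sum_add_distrib, sum_snoc_prefix]
    have key : (if w <:+ v then (1:ℕ) else 0) + (if w <+: x :: v then 1 else 0)
        = (if w <:+ x :: v then 1 else 0) + (if w <+: x :: v ∧ w ≠ x :: v then 1 else 0) := by
      by_cases hp : w <+: x :: v
      · by_cases hne : w = x :: v
        · subst hne
          have h1 : ¬ ((x :: v) <:+ v) := by
            intro h; have := h.length_le; simp at this
          simp [h1]
        · have hiff : (w <:+ x :: v) ↔ (w <:+ v) := by
            rw [List.suffix_cons_iff]; simp [hne]
          simp only [hiff]; simp [hp, hne]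
      · have hne : w ≠ x :: v := by rintro rfl; exact hp prefix_rfl
        have hiff : (w <:+ x :: v) ↔ (w <:+ v) := by
          rw [List.suffix_cons_iff]; simp [hne]
        simp only [hiff]; simp [hp]
    omega

lemma prefix_append_iff_of_le {α : Type*} {w A : List α} (B : List α) (h : w.length ≤ A.length) :
    w <+: A ++ B ↔ w <+: A := by
  constructor
  · intro hp
    have h1 : w = (A ++ B).take w.length := List.prefix_iff_eq_take.mp hp
    rw [List.take_append, show w.length - A.length = 0 by omega] at h1
    simp at h1
    exact List.prefix_iff_eq_take.mpr h1
  · intro hp; exact hp.trans (List.prefix_append A B)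

lemma occ_append {α : Type*} [DecidableEq α] (w : List α) (hw : 1 ≤ w.length) :
    ∀ (v u : List α), w.length - 1 ≤ v.length →
      occ w (v ++ u) = occ w v + occ w (v.drop (v.length - (w.length - 1)) ++ u) := by
  intro v
  induction v with
  | nil =>
    intro u hv
    have hw1 : w.length = 1 := by simp at hv; omega
    have h0 : occ w [] = 0 := by rw [occ_nil_right]; simp; rintro rfl; simp at hw1
    simp [h0]
  | cons x v ih =>
    intro u hv
    by_cases hlen : w.length - 1 ≤ v.length
    · rw [cons_append, occ_cons, occ_cons, ih u hlen]
      have hidx : (x :: v).length - (w.length - 1) = (v.length - (w.length - 1)) + 1 := by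
        simp only [length_cons]; omega
      rw [hidx, List.drop_succ_cons]
      have hpref : (w <+: x :: (v ++ u)) ↔ (w <+: x :: v) := by
        rw [← List.cons_append]
        exact prefix_append_iff_of_le u (by simp; omega)
      rw [if_congr hpref rfl rfl]
      omega
    · have hw2 : w.length = v.length + 2 := by simp at hv; omega
      have hidx : (x :: v).length - (w.length - 1) = 0 := by simp; omega
      rw [hidx, List.drop_zero]
      have h0 : occ w (x :: v) = 0 := occ_of_lt (by simp; omega)
      simp [h0]


section LF
variable {n : ℕ}

def LF (n k : ℕ) : Finset (List (Fin n)) :=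
  (Finset.univ : Finset (Fin k → Fin n)).image List.ofFn

lemma mem_LF {k : ℕ} {l : List (Fin n)} : l ∈ LF n k ↔ l.length = k := by
  constructor
  · intro h
    obtain ⟨x, -, rfl⟩ := Finset.mem_image.mp h
    simp
  · intro h
    refine Finset.mem_image.mpr ⟨fun i => l[(i : ℕ)]'(by omega), Finset.mem_univ _, ?_⟩
    apply List.ext_getElem (by simp [h])
    intro i h1 h2
    simp

lemma LF_zero : LF n 0 = {[]} := by
  ext l; simp [mem_LF, List.length_eq_zero_iff]

lemma sum_LF_reverse {M : Type*} [AddCommMonoid M] (k : ℕ) (F : List (Fin n) → M) :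
    ∑ y ∈ LF n k, F y.reverse = ∑ y ∈ LF n k, F y := by
  apply Finset.sum_nbij' (fun y => y.reverse) (fun y => y.reverse)
  · intro a ha; simp [mem_LF] at ha ⊢; exact ha
  · intro a ha; simp [mem_LF] at ha ⊢; exact ha
  · intro a _; simp
  · intro a _; simp
  · intro a _; rfl

lemma sum_LF_cons {M : Type*} [AddCommMonoid M] (hn : 0 < n) (k : ℕ) (F : List (Fin n) → M) :
    ∑ y ∈ LF n (k + 1), F y = ∑ s : Fin n, ∑ x ∈ LF n k, F (s :: x) := by
  letI : Inhabited (Fin n) := ⟨⟨0, hn⟩⟩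
  rw [← Finset.sum_product']
  apply Finset.sum_nbij' (fun y => ((y.headI, y.tail) : Fin n × List (Fin n)))
    (fun p => p.1 :: p.2)
  · intro a ha
    simp only [mem_LF] at ha
    rcases a with _ | ⟨s, x⟩
    · simp at ha
    · simp [mem_LF] at ha ⊢; omega
  · intro p _; rcases p with ⟨s, x⟩; simp [mem_LF] at *; omega
  · intro a ha
    rcases a with _ | ⟨s, x⟩
    · simp [mem_LF] at ha
    · rfl
  · intro p _; rfl
  · intro a ha
    rcases a with _ | ⟨s, x⟩
    · simp [mem_LF] at ha
    · rfl

lemma sum_LF_snoc {M : Type*} [AddCommMonoid M] (hn : 0 < n) (k : ℕ) (F : List (Fin n) → M) :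
    ∑ y ∈ LF n (k + 1), F y = ∑ s : Fin n, ∑ x ∈ LF n k, F (x ++ [s]) := by
  rw [← sum_LF_reverse (k+1) F, sum_LF_cons hn k (fun y => F y.reverse)]
  congr 1; funext s
  rw [← sum_LF_reverse k (fun x => F (x ++ [s]))]
  apply Finset.sum_congr rfl
  intro x _
  simp

lemma sum_LF_append {M : Type*} [AddCommMonoid M] (k : ℕ) (w : List (Fin n))
    (F : List (Fin n) → M) :
    ∑ x ∈ LF n k, F (x ++ w) = ∑ y ∈ LF n (k + w.length), if w <:+ y then F y else 0 := by
  rw [← Finset.sum_filter]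
  apply Finset.sum_nbij' (fun x => x ++ w) (fun y => y.take (y.length - w.length))
  · intro a ha
    simp [mem_LF] at ha
    simp [Finset.mem_filter, mem_LF, ha, List.suffix_append a w]
  · intro y hy
    simp [Finset.mem_filter, mem_LF] at hy
    simp [mem_LF, List.length_take]; omega
  · intro a ha
    simp [mem_LF] at ha
    rw [show (a ++ w).length - w.length = a.length by simp, List.take_left]
  · intro y hy
    simp [Finset.mem_filter, mem_LF] at hy
    obtain ⟨t, rfl⟩ := hy.2
    rw [show (t ++ w).length - w.length = t.length by simp, List.take_left]
  · intro a _; rfl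
end LF

section Module
variable {n : ℕ}

def RelN (n : ℕ) : Submodule ℚ (List (Fin n) → ℚ) :=
  Submodule.span ℚ
    ({g : List (Fin n) → ℚ | ∃ w : List (Fin n),
        g = fun v => cnt w v - ∑ s : Fin n, cnt (s :: w) v} ∪
     {g : List (Fin n) → ℚ | ∃ w : List (Fin n),
        g = fun v => cnt w v - ∑ s : Fin n, cnt (w ++ [s]) v})

def gL (w : List (Fin n)) : List (Fin n) → ℚ := cnt w - ∑ s : Fin n, cnt (s :: w)
def gR (w : List (Fin n)) : List (Fin n) → ℚ := cnt w - ∑ s : Fin n, cnt (w ++ [s])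

lemma gL_eq (w : List (Fin n)) :
    gL w = fun v => cnt w v - ∑ s : Fin n, cnt (s :: w) v := by
  funext v; simp [gL, Finset.sum_apply]

lemma gR_eq (w : List (Fin n)) :
    gR w = fun v => cnt w v - ∑ s : Fin n, cnt (w ++ [s]) v := by
  funext v; simp [gR, Finset.sum_apply]

lemma gL_mem (w : List (Fin n)) : gL w ∈ RelN n :=
  Submodule.subset_span (Or.inl ⟨w, gL_eq w⟩)

lemma gR_mem (w : List (Fin n)) : gR w ∈ RelN n :=
  Submodule.subset_span (Or.inr ⟨w, gR_eq w⟩)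

lemma occ_nil_left (v : List (Fin n)) : occ ([] : List (Fin n)) v = v.length + 1 := by
  simp [occ]

lemma cnt_eq_occ {w : List (Fin n)} (h : w ≠ []) (v : List (Fin n)) :
    cnt w v = (occ w v : ℚ) := by simp [cnt, h]

lemma sum_cnt_cons (w v : List (Fin n)) :
    ∑ s : Fin n, cnt (s :: w) v = ((∑ s : Fin n, occ (s :: w) v : ℕ) : ℚ) := by
  push_cast
  exact Finset.sum_congr rfl fun s _ => cnt_eq_occ (by simp) v

lemma gL_apply (w : List (Fin n)) (v : List (Fin n)) :
    gL w v = if w ≠ [] ∧ w <+: v then 1 else 0 := by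
  have hocc := occ_left w v
  rcases eq_or_ne w ([] : List (Fin n)) with rfl | hw
  · have h2 : (∑ s : Fin n, occ (s :: ([]:List (Fin n))) v) = v.length := by
      have := occ_left ([] : List (Fin n)) v
      rw [occ_nil_left] at this
      simp only [List.nil_prefix, if_pos] at this
      omega
    rw [gL_eq]
    simp only
    rw [sum_cnt_cons, h2]
    simp [cnt]
  · rw [gL_eq]
    simp only
    rw [sum_cnt_cons, cnt_eq_occ hw, hocc]
    push_cast
    by_cases hp : w <+: v <;> simp [hp, hw]

lemma sum_cnt_snoc (w v : List (Fin n)) :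
    ∑ s : Fin n, cnt (w ++ [s]) v = ((∑ s : Fin n, occ (w ++ [s]) v : ℕ) : ℚ) := by
  push_cast
  exact Finset.sum_congr rfl fun s _ => cnt_eq_occ (by simp) v

lemma gR_apply (w : List (Fin n)) (v : List (Fin n)) :
    gR w v = if w ≠ [] ∧ w <:+ v then 1 else 0 := by
  have hocc := occ_right w v
  rcases eq_or_ne w ([] : List (Fin n)) with rfl | hw
  · have h2 : (∑ s : Fin n, occ (([]:List (Fin n)) ++ [s]) v) = v.length := by
      have := occ_right ([] : List (Fin n)) v
      rw [occ_nil_left] at this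
      simp only [List.nil_suffix, if_pos] at this
      omega
    rw [gR_eq]
    simp only
    rw [sum_cnt_snoc, h2]
    simp [cnt]
  · rw [gR_eq]
    simp only
    rw [sum_cnt_snoc, cnt_eq_occ hw, hocc]
    push_cast
    by_cases hp : w <:+ v <;> simp [hp, hw]

lemma gL_bound (w v : List (Fin n)) : |gL w v| ≤ 1 := by
  rw [gL_apply]; split_ifs <;> norm_num

lemma gR_bound (w v : List (Fin n)) : |gR w v| ≤ 1 := by
  rw [gR_apply]; split_ifs <;> norm_num

lemma RelN_bounded {f : List (Fin n) → ℚ} (hf : f ∈ RelN n) :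
    ∃ C : ℚ, ∀ v : List (Fin n), |f v| ≤ C := by
  induction hf using Submodule.span_induction with
  | mem g hg =>
    rcases hg with ⟨w, rfl⟩ | ⟨w, rfl⟩
    · exact ⟨1, fun v => by rw [← gL_eq]; exact gL_bound w v⟩
    · exact ⟨1, fun v => by rw [← gR_eq]; exact gR_bound w v⟩
  | zero => exact ⟨0, fun v => by simp⟩
  | add g h _ _ ihg ihh =>
    obtain ⟨C1, h1⟩ := ihg; obtain ⟨C2, h2⟩ := ihh
    exact ⟨C1 + C2, fun v => le_trans (abs_add_le _ _) (add_le_add (h1 v) (h2 v))⟩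
  | smul q g _ ihg =>
    obtain ⟨C, h1⟩ := ihg
    refine ⟨|q| * C, fun v => ?_⟩
    rw [Pi.smul_apply, smul_eq_mul, abs_mul]
    exact mul_le_mul_of_nonneg_left (h1 v) (abs_nonneg q)

lemma RelN_le_spanP :
    RelN n ≤ Submodule.span ℚ {g : List (Fin n) → ℚ | ∃ w : List (Fin n), g = cnt w} := by
  apply Submodule.span_le.mpr
  rintro g (⟨w, rfl⟩ | ⟨w, rfl⟩)
  · rw [← gL_eq]
    exact sub_mem (Submodule.subset_span ⟨w, rfl⟩)
      (Submodule.sum_mem _ fun s _ => Submodule.subset_span ⟨s :: w, rfl⟩)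
  · rw [← gR_eq]
    exact sub_mem (Submodule.subset_span ⟨w, rfl⟩)
      (Submodule.sum_mem _ fun s _ => Submodule.subset_span ⟨w ++ [s], rfl⟩)

lemma raise (hn : 0 < n) (k : ℕ) (w : List (Fin n)) :
    (cnt w - ∑ x ∈ LF n k, cnt (x ++ w)) ∈ RelN n := by
  induction k with
  | zero => simp [LF_zero]
  | succ k ih =>
    have key : ∑ x ∈ LF n (k + 1), cnt (x ++ w)
        = ∑ x ∈ LF n k, ∑ s : Fin n, cnt (s :: (x ++ w)) := by
      rw [sum_LF_cons hn k (fun y => cnt (y ++ w))]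
      rw [Finset.sum_comm]
      simp [List.cons_append]
    rw [key]
    have hsplit : cnt w - ∑ x ∈ LF n k, ∑ s : Fin n, cnt (s :: (x ++ w))
        = (cnt w - ∑ x ∈ LF n k, cnt (x ++ w)) + ∑ x ∈ LF n k, gL (x ++ w) := by
      simp only [gL]
      rw [Finset.sum_sub_distrib]
      abel
    rw [hsplit]
    exact add_mem ih (Submodule.sum_mem _ fun x _ => gL_mem _)


def Gv (N : ℕ) (a : List (Fin n) → ℚ) : List (Fin n) → ℚ :=
  fun v => ∑ y ∈ LF n N, a y * (occ y v : ℚ)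

lemma Gv_glue {N : ℕ} (hN : 1 ≤ N) (a : List (Fin n) → ℚ) (v u : List (Fin n))
    (hv : N - 1 ≤ v.length) :
    Gv N a (v ++ u) = Gv N a v + Gv N a (v.drop (v.length - (N - 1)) ++ u) := by
  unfold Gv
  rw [← Finset.sum_add_distrib]
  apply Finset.sum_congr rfl
  intro y hy
  have hy' : y.length = N := mem_LF.mp hy
  have := occ_append y (by omega) v u (by omega)
  rw [hy'] at this
  rw [this]
  push_cast
  ring

def powL {α : Type*} (v : List α) : ℕ → List α
  | 0 => v
  | m + 1 => powL v m ++ v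

lemma length_powL {α : Type*} (v : List α) (m : ℕ) : v.length ≤ (powL v m).length := by
  induction m with
  | zero => simp [powL]
  | succ m ih => simp only [powL, List.length_append]; omega

lemma drop_powL {α : Type*} (v : List α) (k : ℕ) (hk : k ≤ v.length) (m : ℕ) :
    (powL v m).drop ((powL v m).length - k) = v.drop (v.length - k) := by
  induction m with
  | zero => rfl
  | succ m ih =>
    show (powL v m ++ v).drop ((powL v m ++ v).length - k) = _
    rw [List.length_append, show (powL v m).length + v.length - k
        = (powL v m).length + (v.length - k) by omega,
      List.drop_append, List.drop_eq_nil_of_le (by omega),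
      show (powL v m).length + (v.length - k) - (powL v m).length = v.length - k by omega,
      List.nil_append]

lemma Gv_pow {N : ℕ} (hN : 1 ≤ N) (a : List (Fin n) → ℚ) (v : List (Fin n))
    (hv : N - 1 ≤ v.length) (m : ℕ) :
    Gv N a (powL v m) = Gv N a v + m * Gv N a (v.drop (v.length - (N - 1)) ++ v) := by
  induction m with
  | zero => simp [powL]
  | succ m ih =>
    show Gv N a (powL v m ++ v) = _
    rw [Gv_glue hN a (powL v m) v (le_trans hv (length_powL v m)),
      drop_powL v (N - 1) (by omega) m, ih]
    push_cast
    ring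

lemma Gv_loop {N : ℕ} (hN : 1 ≤ N) (a : List (Fin n) → ℚ) (C : ℚ)
    (hb : ∀ v, |Gv N a v| ≤ C) (v : List (Fin n)) (hv : N - 1 ≤ v.length) :
    Gv N a (v.drop (v.length - (N - 1)) ++ v) = 0 := by
  by_contra hc
  set c := Gv N a (v.drop (v.length - (N - 1)) ++ v) with hcdef
  obtain ⟨m, hm⟩ := exists_nat_gt ((C + |Gv N a v|) / |c|)
  have h1 : |Gv N a v + (m : ℚ) * c| ≤ C := by
    rw [← Gv_pow hN a v hv m]; exact hb _
  have h2 : (m : ℚ) * |c| ≤ C + |Gv N a v| := by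
    have : |(m : ℚ) * c| = |(Gv N a v + (m : ℚ) * c) - Gv N a v| := by ring_nf
    calc (m : ℚ) * |c| = |(m : ℚ) * c| := by rw [abs_mul, Nat.abs_cast]
    _ = |(Gv N a v + (m : ℚ) * c) - Gv N a v| := this
    _ ≤ |Gv N a v + (m : ℚ) * c| + |Gv N a v| := abs_sub _ _
    _ ≤ C + |Gv N a v| := by linarith
  have hcpos : 0 < |c| := abs_pos.mpr hc
  rw [div_lt_iff₀ hcpos] at hm
  linarith

lemma Gv_pump {N : ℕ} (hN : 1 ≤ N) (a : List (Fin n) → ℚ) (C : ℚ)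
    (hb : ∀ v, |Gv N a v| ≤ C) (v : List (Fin n)) (hv : N - 1 ≤ v.length) :
    Gv N a v = - Gv N a (v.drop (v.length - (N - 1)) ++ v.take (N - 1)) := by
  have h0 := Gv_loop hN a C hb v hv
  set s := v.drop (v.length - (N - 1)) with hs
  set p := v.take (N - 1) with hp
  have hslen : s.length = N - 1 := by rw [hs, List.length_drop]; omega
  have hplen : p.length = N - 1 := by rw [hp, List.length_take]; omega
  have hsplit : s ++ v = (s ++ p) ++ v.drop (N - 1) := by
    rw [List.append_assoc, hp, List.take_append_drop]
  rw [hsplit] at h0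
  rw [Gv_glue hN a (s ++ p) (v.drop (N - 1)) (by rw [List.length_append]; omega)] at h0
  rw [show (s ++ p).length - (N - 1) = s.length by rw [List.length_append]; omega,
    List.drop_left] at h0
  rw [hp, List.take_append_drop] at h0
  rw [hp]
  linarith



lemma Gv_swap {N : ℕ} (hN : 1 ≤ N) (a : List (Fin n) → ℚ) (C : ℚ)
    (hb : ∀ v, |Gv N a v| ≤ C) (A B : List (Fin n))
    (hA : A.length = N - 1) (hB : B.length = N - 1) :
    Gv N a (A ++ B) = - Gv N a (B ++ A) := by
  have := Gv_pump hN a C hb (A ++ B) (by rw [List.length_append]; omega)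
  rw [show (A ++ B).length - (N - 1) = A.length by rw [List.length_append]; omega,
    List.drop_left, List.take_left' hA] at this
  exact this

lemma Gv_three {N : ℕ} (hN : 1 ≤ N) (a : List (Fin n) → ℚ) (A B C : List (Fin n))
    (hA : A.length = N - 1) (hB : B.length = N - 1) :
    Gv N a ((A ++ B) ++ C) = Gv N a (A ++ B) + Gv N a (B ++ C) := by
  rw [Gv_glue hN a (A ++ B) C (by rw [List.length_append]; omega),
    show (A ++ B).length - (N - 1) = A.length by rw [List.length_append]; omega,
    List.drop_left]

lemma a_eq_Gv {N : ℕ} (hN : 1 ≤ N) (a : List (Fin n) → ℚ) {y : List (Fin n)}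
    (hy : y ∈ LF n N) : Gv N a y = a y := by
  unfold Gv
  have hylen := mem_LF.mp hy
  have : ∀ y' ∈ LF n N, a y' * (occ y' y : ℚ) = if y' = y then a y' else 0 := by
    intro y' hy'
    rw [occ_eq_of_length_eq (by rw [hylen, mem_LF.mp hy'])]
    split_ifs <;> simp
  rw [Finset.sum_congr rfl this, Finset.sum_ite_eq' (LF n N) y a, if_pos hy]

lemma a_coboundary (hn : 0 < n) {N : ℕ} (hN : 1 ≤ N) (a : List (Fin n) → ℚ) (C : ℚ)
    (hb : ∀ v, |Gv N a v| ≤ C) {y : List (Fin n)} (hy : y ∈ LF n N) :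
    a y = Gv N a (y.take (N - 1) ++ List.replicate (N - 1) (⟨0, hn⟩ : Fin n))
        - Gv N a (y.drop 1 ++ List.replicate (N - 1) (⟨0, hn⟩ : Fin n)) := by
  set z : List (Fin n) := List.replicate (N - 1) (⟨0, hn⟩ : Fin n) with hz
  have hzlen : z.length = N - 1 := by simp [hz]
  have hylen := mem_LF.mp hy
  set p := y.take (N - 1) with hp
  set s := y.drop 1 with hs
  have hplen : p.length = N - 1 := by rw [hp, List.length_take]; omega
  have hslen : s.length = N - 1 := by rw [hs, List.length_drop]; omega
  have h1 : Gv N a y = - Gv N a (s ++ p) := by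
    have := Gv_pump hN a C hb y (by omega)
    rw [show y.length - (N - 1) = 1 by omega] at this
    exact this
  have h2 : Gv N a ((p ++ z) ++ s) = Gv N a (p ++ z) + Gv N a (z ++ s) :=
    Gv_three hN a p z s hplen hzlen
  have h3 : Gv N a ((p ++ z) ++ s) = - Gv N a (s ++ p) := by
    have := Gv_pump hN a C hb ((p ++ z) ++ s)
      (by rw [List.length_append, List.length_append]; omega)
    rw [show ((p ++ z) ++ s).length - (N - 1) = (p ++ z).length by
        simp only [List.length_append]; omega,
      List.drop_left,
      show ((p ++ z) ++ s).take (N - 1) = p by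
        rw [List.append_assoc, List.take_left' hplen]] at this
    exact this
  have h4 : Gv N a (z ++ s) = - Gv N a (s ++ z) := Gv_swap hN a C hb z s hzlen hslen
  have h5 := a_eq_Gv hN a hy
  rw [← h5, h1, ← h3, h2, h4]
  ring



lemma main_bounded (hn : 0 < n) {N : ℕ} (hN : 1 ≤ N) (a : List (Fin n) → ℚ) (C : ℚ)
    (hb : ∀ v, |Gv N a v| ≤ C) :
    (∑ y ∈ LF n N, a y • (cnt y : List (Fin n) → ℚ)) ∈ RelN n := by
  obtain ⟨K, rfl⟩ : ∃ K, N = K + 1 := ⟨N - 1, by omega⟩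
  set z : List (Fin n) := List.replicate (K + 1 - 1) (⟨0, hn⟩ : Fin n) with hz
  set h : List (Fin n) → ℚ := fun x => Gv (K + 1) a (x ++ z) with hh
  have step1 : (∑ y ∈ LF n (K + 1), a y • (cnt y : List (Fin n) → ℚ))
      = ∑ y ∈ LF n (K + 1), (h (y.take K) - h (y.drop 1)) • (cnt y : List (Fin n) → ℚ) := by
    apply Finset.sum_congr rfl
    intro y hy
    have := a_coboundary hn hN a C hb hy
    rw [show K + 1 - 1 = K from rfl] at this
    rw [this]
    rfl
  rw [step1]
  simp only [sub_smul]
  rw [Finset.sum_sub_distrib]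
  have e1 : (∑ y ∈ LF n (K + 1), h (y.take K) • (cnt y : List (Fin n) → ℚ))
      = ∑ x ∈ LF n K, h x • (∑ s : Fin n, (cnt (x ++ [s]) : List (Fin n) → ℚ)) := by
    rw [sum_LF_snoc hn K (fun y => h (y.take K) • (cnt y : List (Fin n) → ℚ))]
    rw [Finset.sum_comm]
    apply Finset.sum_congr rfl
    intro x hx
    rw [Finset.smul_sum]
    apply Finset.sum_congr rfl
    intro s _
    rw [List.take_left' (mem_LF.mp hx)]
  have e2 : (∑ y ∈ LF n (K + 1), h (y.drop 1) • (cnt y : List (Fin n) → ℚ))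
      = ∑ x ∈ LF n K, h x • (∑ s : Fin n, (cnt (s :: x) : List (Fin n) → ℚ)) := by
    rw [sum_LF_cons hn K (fun y => h (y.drop 1) • (cnt y : List (Fin n) → ℚ))]
    rw [Finset.sum_comm]
    apply Finset.sum_congr rfl
    intro x hx
    rw [Finset.smul_sum]
    apply Finset.sum_congr rfl
    intro s _
    norm_num
  rw [e1, e2, ← Finset.sum_sub_distrib]
  apply Submodule.sum_mem
  intro x hx
  have : h x • (∑ s : Fin n, (cnt (x ++ [s]) : List (Fin n) → ℚ))
      - h x • (∑ s : Fin n, (cnt (s :: x) : List (Fin n) → ℚ))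
      = h x • (gL x - gR x) := by
    rw [← smul_sub]
    congr 1
    simp only [gL, gR]
    abel
  rw [this]
  exact Submodule.smul_mem _ _ (sub_mem (gL_mem x) (gR_mem x))



lemma normal_form (hn : 0 < n) (f : List (Fin n) → ℚ)
    (hf : f ∈ Submodule.span ℚ {g : List (Fin n) → ℚ | ∃ w : List (Fin n), g = cnt w}) :
    ∃ N, 1 ≤ N ∧ ∃ a : List (Fin n) → ℚ,
      (f - ∑ y ∈ LF n N, a y • (cnt y : List (Fin n) → ℚ)) ∈ RelN n := by
  obtain ⟨m, c, g, hsum⟩ := Submodule.mem_span_set'.mp hf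
  choose w hw using fun i => (g i).2
  set N := (Finset.univ.sup fun i => (w i).length) + 1 with hNdef
  have hN : 1 ≤ N := by omega
  have hwle : ∀ i, (w i).length ≤ N := fun i => by
    have h' := Finset.le_sup (f := fun i => (w i).length) (Finset.mem_univ i)
    omega
  refine ⟨N, hN, fun y => ∑ i, c i * (if w i <:+ y then 1 else 0), ?_⟩
  have hrw : ∀ i, (∑ x ∈ LF n (N - (w i).length), (cnt (x ++ w i) : List (Fin n) → ℚ))
      = ∑ y ∈ LF n N, (if w i <:+ y then (cnt y : List (Fin n) → ℚ) else 0) := by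
    intro i
    rw [sum_LF_append (N - (w i).length) (w i) (fun y => (cnt y : List (Fin n) → ℚ)),
      Nat.sub_add_cancel (hwle i)]
  have swap : ∑ i, c i • (∑ y ∈ LF n N, if w i <:+ y then (cnt y : List (Fin n) → ℚ) else 0)
      = ∑ y ∈ LF n N, (∑ i, c i * (if w i <:+ y then 1 else 0)) • (cnt y : List (Fin n) → ℚ) := by
    simp only [Finset.smul_sum]
    rw [Finset.sum_comm]
    apply Finset.sum_congr rfl
    intro y _
    rw [Finset.sum_smul]
    apply Finset.sum_congr rfl
    intro i _
    split_ifs <;> simp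
  have key : f - ∑ y ∈ LF n N, (∑ i, c i * (if w i <:+ y then 1 else 0))
        • (cnt y : List (Fin n) → ℚ)
      = ∑ i, c i • ((cnt (w i) : List (Fin n) → ℚ)
          - ∑ x ∈ LF n (N - (w i).length), (cnt (x ++ w i) : List (Fin n) → ℚ)) := by
    rw [← swap]
    simp only [smul_sub]
    rw [Finset.sum_sub_distrib]
    congr 1
    · rw [← hsum]
      apply Finset.sum_congr rfl
      intro i _
      rw [hw i]
    · apply Finset.sum_congr rfl
      intro i _
      rw [hrw i]
  rw [key]
  exact Submodule.sum_mem _ fun i _ => Submodule.smul_mem _ _ (raise hn _ (w i))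

end Module

/-- K(M_n), the subspace of bounded counting functions, is spanned by the extension
relations l_w = p_w - Σ_s p_{sw} and r_w = p_w - Σ_s p_{ws}. -/
theorem stmt_13 (n : ℕ) (hn : 2 ≤ n) (f : List (Fin n) → ℚ) :
    (f ∈ Submodule.span ℚ {g : List (Fin n) → ℚ | ∃ w : List (Fin n), g = cnt w} ∧
      ∃ C : ℚ, ∀ v : List (Fin n), |f v| ≤ C) ↔
    f ∈ Submodule.span ℚ
      ({g : List (Fin n) → ℚ | ∃ w : List (Fin n),
          g = fun v => cnt w v - ∑ s : Fin n, cnt (s :: w) v} ∪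
       {g : List (Fin n) → ℚ | ∃ w : List (Fin n),
          g = fun v => cnt w v - ∑ s : Fin n, cnt (w ++ [s]) v}) := by
  have hn0 : 0 < n := by omega
  constructor
  · rintro ⟨hfspan, C, hC⟩
    obtain ⟨N, hN, a, hmem⟩ := normal_form hn0 f hfspan
    have hGv_eq : ∀ v, Gv N a v = (∑ y ∈ LF n N, a y • (cnt y : List (Fin n) → ℚ)) v := by
      intro v
      rw [Finset.sum_apply]
      unfold Gv
      apply Finset.sum_congr rfl
      intro y hy
      have hynil : y ≠ [] := by
        intro hnil
        have := mem_LF.mp hy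
        rw [hnil] at this
        simp at this
        omega
      rw [Pi.smul_apply, smul_eq_mul, cnt_eq_occ hynil v]
    obtain ⟨C1, hC1⟩ := RelN_bounded hmem
    have hb : ∀ v, |Gv N a v| ≤ C + C1 := by
      intro v
      have h1 := hC1 v
      rw [Pi.sub_apply] at h1
      have h2 := hC v
      have h3 : Gv N a v = f v - (f v - (∑ y ∈ LF n N, a y • (cnt y : List (Fin n) → ℚ)) v) := by
        rw [hGv_eq v]; ring
      rw [h3]
      calc |f v - (f v - (∑ y ∈ LF n N, a y • (cnt y : List (Fin n) → ℚ)) v)|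
          ≤ |f v| + |f v - (∑ y ∈ LF n N, a y • (cnt y : List (Fin n) → ℚ)) v| := abs_sub _ _
        _ ≤ C + C1 := add_le_add h2 h1
    have hD : (∑ y ∈ LF n N, a y • (cnt y : List (Fin n) → ℚ)) ∈ RelN n :=
      main_bounded hn0 hN a (C + C1) hb
    have hf : f ∈ RelN n := by
      rw [show f = (f - ∑ y ∈ LF n N, a y • (cnt y : List (Fin n) → ℚ))
          + ∑ y ∈ LF n N, a y • (cnt y : List (Fin n) → ℚ) by ring]
      exact add_mem hmem hD
    exact hf
  · intro hf
    have hf' : f ∈ RelN n := hf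
    exact ⟨RelN_le_spanP hf', RelN_bounded hf'⟩
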